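/- Let p be an odd prime and K = ℚ_p(ζ_p). The residue of the formal differential log η(X) · d log ε(X) · X^{-p} at X = 0, for ε(X), η(X) ∈ 1 + X·ℤ_p[[X]], lies in ℤ_p; i.e., the coefficient of X^{-1} in log η(X) · (ε'(X)/ε(X)) · X^{-p} is a p-adic integer. -/

import Mathlib

open PowerSeries

/-- The formal logarithm `log(1+T) = Σ_{m≥1} (-1)^{m+1} T^m / m` applied to `f = 1 + T`,
computed coefficientwise. -/
noncomputable def plog {F : Type*} [Field F] (f : PowerSeries F) : PowerSeries F :=
  PowerSeries.mk fun k =>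
    ∑ m ∈ Finset.Icc 1 k, ((-1 : F) ^ (m + 1) / (m : F)) * coeff k ((f - 1) ^ m)

lemma aux_unit (p : ℕ) [Fact p.Prime] {m : ℕ} (hm : 1 ≤ m) (hmp : m < p) :
    ∃ u : ℤ_[p], PadicInt.Coe.ringHom (p := p) u = ((m : ℚ_[p]))⁻¹ := by
  have hdvd : ¬ (p : ℤ) ∣ (m : ℤ) := by
    rw [Int.natCast_dvd_natCast]
    exact Nat.not_dvd_of_pos_of_lt hm hmp
  have hnorm : ‖(m : ℤ_[p])‖ = 1 := by
    refine le_antisymm (PadicInt.norm_le_one _) ?_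
    by_contra h
    push_neg at h
    have : ‖((m : ℤ) : ℤ_[p])‖ < 1 := by push_cast; exact h
    exact hdvd ((PadicInt.norm_int_lt_one_iff_dvd _).mp this)
  obtain ⟨v, hv⟩ := PadicInt.isUnit_iff.mpr hnorm
  have h1 : ((v⁻¹ : ℤ_[p]ˣ) : ℤ_[p]) * (m : ℤ_[p]) = 1 := by
    rw [← hv]; exact v.inv_mul
  have h2 : PadicInt.Coe.ringHom (p := p) ((v⁻¹ : ℤ_[p]ˣ) : ℤ_[p]) *
      PadicInt.Coe.ringHom (p := p) ((m : ℕ) : ℤ_[p]) = 1 := by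
    rw [← map_mul, h1, map_one]
  rw [map_natCast] at h2
  exact ⟨_, eq_inv_of_mul_eq_one_left h2⟩

theorem vostokov_stmt10 (p : ℕ) [Fact p.Prime] (hp : p ≠ 2)
    (ε η : PowerSeries ℤ_[p])
    (hε : constantCoeff ε = 1) (hη : constantCoeff η = 1) :
    ∃ c : ℤ_[p],
      coeff (p - 1)
        (plog (PowerSeries.map (PadicInt.Coe.ringHom (p := p)) η) *
          derivativeFun (PowerSeries.map (PadicInt.Coe.ringHom (p := p)) ε) *
          (PowerSeries.map (PadicInt.Coe.ringHom (p := p)) ε)⁻¹) = (c : ℚ_[p]) := by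
  set φ : ℤ_[p] →+* ℚ_[p] := PadicInt.Coe.ringHom (p := p)
  set R : Subring ℚ_[p] := φ.range with hR
  set ε' := PowerSeries.map φ ε
  set η' := PowerSeries.map φ η
  -- the inverse of ε' is the map of invOfUnit
  have hcε : constantCoeff ε' = 1 := by
    rw [show ε' = PowerSeries.map φ ε from rfl, ← coeff_zero_eq_constantCoeff_apply,
      PowerSeries.coeff_map, coeff_zero_eq_constantCoeff_apply, hε, map_one]
  have hinv : ε'⁻¹ = PowerSeries.map φ (PowerSeries.invOfUnit ε 1) := by
    rw [eq_comm, PowerSeries.eq_inv_iff_mul_eq_one (by rw [hcε]; exact one_ne_zero)]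
    rw [show ε' = PowerSeries.map φ ε from rfl, ← map_mul,
      PowerSeries.invOfUnit_mul ε 1 (by simp [hε]), map_one]
  -- coefficient membership lemmas
  have hA : ∀ k : ℕ, k ≤ p - 1 → coeff k (plog η') ∈ R := by
    intro k hk
    rw [plog, coeff_mk]
    refine Subring.sum_mem R ?_
    intro m hm
    simp only [Finset.mem_Icc] at hm
    have hmp : m < p := lt_of_le_of_lt (le_trans hm.2 hk)
      (Nat.sub_lt (Fact.out (p := p.Prime)).pos one_pos)
    obtain ⟨u, hu⟩ := aux_unit p hm.1 hmp
    have hpow : (η' - 1) ^ m = PowerSeries.map φ ((η - 1) ^ m) := by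
      rw [map_pow, map_sub, map_one]
    have : ((-1 : ℚ_[p]) ^ (m + 1) / (m : ℚ_[p])) * coeff k ((η' - 1) ^ m)
        = φ ((-1 : ℤ_[p]) ^ (m + 1) * u * coeff k ((η - 1) ^ m)) := by
      rw [hpow, PowerSeries.coeff_map]
      simp only [map_mul, map_pow, map_neg, map_one, show φ u = (m : ℚ_[p])⁻¹ from hu, div_eq_mul_inv]
    rw [this]
    exact ⟨_, rfl⟩
  have hB : ∀ k : ℕ, coeff k (derivativeFun ε') ∈ R := by
    intro k
    rw [show derivativeFun ε' = d⁄dX ℚ_[p] ε' from rfl, PowerSeries.coeff_derivativeFun, PowerSeries.coeff_map]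
    refine ⟨coeff (k + 1) ε * ((k : ℤ_[p]) + 1), ?_⟩
    push_cast
    rfl
  have hC : ∀ k : ℕ, coeff k ε'⁻¹ ∈ R := by
    intro k
    rw [hinv, PowerSeries.coeff_map]
    exact ⟨_, rfl⟩
  -- now expand the product coefficient
  have hmem : coeff (p - 1)
      (plog η' * derivativeFun ε' * ε'⁻¹) ∈ R := by
    rw [PowerSeries.coeff_mul]
    refine Subring.sum_mem R ?_
    intro x hx
    rw [Finset.HasAntidiagonal.mem_antidiagonal] at hx
    refine Subring.mul_mem R ?_ (hC x.2)
    rw [PowerSeries.coeff_mul]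
    refine Subring.sum_mem R ?_
    intro y hy
    rw [Finset.HasAntidiagonal.mem_antidiagonal] at hy
    refine Subring.mul_mem R (hA y.1 ?_) (hB y.2)
    omega
  obtain ⟨c, hc⟩ := hmem
  exact ⟨c, hc.symm⟩
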